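/- Let h ≥ 1, r₁,...,r_h ≥ 0 with Σ_j r_j = 1, and 0 ≤ γ₁ < ... < γ_h. Let L₀ ≥ 0 and δ₀ ≥ δ₁ ≥ ... ≥ δ_h ≥ 0 with δ₀ ≤ β·L₀ for some β ≥ 0. Suppose L_j ≤ L₀ + γ₁·δ₀ + Σ_{g=1}^{j-1}(γ_{g+1}−γ_g)·δ_g − γ_j·δ_j for each j ∈ {1,...,h}. Then Σ_{j=1}^h r_j·L_j ≤ (1 + β·max_{j∈{1,...,h}} { γ_j·Σ_{p=j}^h r_p })·L₀. -/

import Mathlib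

theorem stmt_7 (h : ℕ) (hh : 1 ≤ h) (β : ℝ) (hβ : 0 ≤ β)
    (r γ L δ : ℕ → ℝ)
    (hr : ∀ j, 1 ≤ j → j ≤ h → 0 ≤ r j)
    (hrsum : ∑ j ∈ Finset.Icc 1 h, r j = 1)
    (hγ0 : 0 ≤ γ 1)
    (hγmono : ∀ i j, 1 ≤ i → i < j → j ≤ h → γ i < γ j)
    (hL0 : 0 ≤ L 0)
    (hδmono : ∀ i j, i ≤ j → j ≤ h → δ j ≤ δ i)
    (hδh : 0 ≤ δ h)
    (hδ0 : δ 0 ≤ β * L 0)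
    (hL : ∀ j, 1 ≤ j → j ≤ h →
      L j ≤ L 0 + γ 1 * δ 0 +
        (∑ g ∈ Finset.Icc 1 (j - 1), (γ (g + 1) - γ g) * δ g) - γ j * δ j) :
    ∑ j ∈ Finset.Icc 1 h, r j * L j ≤
      (1 + β * (Finset.Icc 1 h).sup' (Finset.nonempty_Icc.mpr hh)
        (fun j => γ j * ∑ p ∈ Finset.Icc j h, r p)) * L 0 := by
  set M := (Finset.Icc 1 h).sup' (Finset.nonempty_Icc.mpr hh)
      (fun j => γ j * ∑ p ∈ Finset.Icc j h, r p) with hMdef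
  have h1mem : (1:ℕ) ∈ Finset.Icc 1 h := Finset.mem_Icc.mpr ⟨le_refl 1, hh⟩
  have hM0 : 0 ≤ M := by
    have h1 : γ 1 * ∑ p ∈ Finset.Icc 1 h, r p ≤ M :=
      Finset.le_sup' (fun j => γ j * ∑ p ∈ Finset.Icc j h, r p) h1mem
    rw [hrsum, mul_one] at h1
    linarith
  -- Abel summation identity
  have key : ∀ j, 1 ≤ j →
      γ 1 * δ 0 + (∑ g ∈ Finset.Icc 1 (j - 1), (γ (g + 1) - γ g) * δ g) - γ j * δ j
        = ∑ g ∈ Finset.Icc 1 j, γ g * (δ (g - 1) - δ g) := by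
    intro j hj
    induction j, hj using Nat.le_induction with
    | base => simp; ring
    | succ n hn ih =>
      have h1 : ∑ g ∈ Finset.Icc 1 (n + 1 - 1), (γ (g + 1) - γ g) * δ g
          = (∑ g ∈ Finset.Icc 1 (n - 1), (γ (g + 1) - γ g) * δ g) + (γ (n + 1) - γ n) * δ n := by
        have e1 : n + 1 - 1 = (n - 1) + 1 := by omega
        have e2 : n - 1 + 1 = n := by omega
        rw [e1, Finset.sum_Icc_succ_top (by omega), e2]
      rw [h1, Finset.sum_Icc_succ_top (by omega : 1 ≤ n + 1), ← ih]
      have e3 : n + 1 - 1 = n := rfl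
      rw [e3]
      ring
  have step1 : ∑ j ∈ Finset.Icc 1 h, r j * L j
      ≤ ∑ j ∈ Finset.Icc 1 h, r j * (L 0 + ∑ g ∈ Finset.Icc 1 j, γ g * (δ (g - 1) - δ g)) := by
    apply Finset.sum_le_sum
    intro j hj
    obtain ⟨hj1, hj2⟩ := Finset.mem_Icc.mp hj
    have hLj := hL j hj1 hj2
    have hk := key j hj1
    exact mul_le_mul_of_nonneg_left (by linarith) (hr j hj1 hj2)
  have swap : ∑ j ∈ Finset.Icc 1 h, ∑ g ∈ Finset.Icc 1 j, r j * (γ g * (δ (g - 1) - δ g))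
      = ∑ g ∈ Finset.Icc 1 h, ∑ j ∈ Finset.Icc g h, r j * (γ g * (δ (g - 1) - δ g)) := by
    simp_rw [← Finset.Ico_add_one_right_eq_Icc]
    exact (Finset.sum_Ico_Ico_comm 1 (h + 1)
      (fun g j => r j * (γ g * (δ (g - 1) - δ g)))).symm
  have step2 : ∑ j ∈ Finset.Icc 1 h, r j * (L 0 + ∑ g ∈ Finset.Icc 1 j, γ g * (δ (g - 1) - δ g))
      = L 0 + ∑ g ∈ Finset.Icc 1 h,
          (γ g * ∑ p ∈ Finset.Icc g h, r p) * (δ (g - 1) - δ g) := by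
    simp_rw [mul_add, Finset.sum_add_distrib, ← Finset.sum_mul, hrsum, one_mul, Finset.mul_sum]
    congr 1
    rw [swap]
    apply Finset.sum_congr rfl
    intro g _
    rw [← Finset.sum_mul]
    simp_rw [← Finset.mul_sum]
    ring
  have step3 : ∑ g ∈ Finset.Icc 1 h, (γ g * ∑ p ∈ Finset.Icc g h, r p) * (δ (g - 1) - δ g)
      ≤ ∑ g ∈ Finset.Icc 1 h, M * (δ (g - 1) - δ g) := by
    apply Finset.sum_le_sum
    intro g hg
    obtain ⟨hg1, hg2⟩ := Finset.mem_Icc.mp hg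
    have hd : 0 ≤ δ (g - 1) - δ g := by
      have := hδmono (g - 1) g (by omega) hg2; linarith
    exact mul_le_mul_of_nonneg_right
      (Finset.le_sup' (fun j => γ j * ∑ p ∈ Finset.Icc j h, r p) hg) hd
  have tel : ∑ g ∈ Finset.Icc 1 h, (δ (g - 1) - δ g) = δ 0 - δ h := by
    rw [← Finset.Ico_add_one_right_eq_Icc, Finset.sum_Ico_eq_sum_range]
    have e : h + 1 - 1 = h := rfl
    rw [e]
    have hcong : ∀ i ∈ Finset.range h, δ (1 + i - 1) - δ (1 + i) = δ i - δ (i + 1) := by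
      intro i _
      congr 1
      · congr 1; omega
      · congr 1; omega
    rw [Finset.sum_congr rfl hcong, Finset.sum_range_sub' δ h]
  calc ∑ j ∈ Finset.Icc 1 h, r j * L j
      ≤ ∑ j ∈ Finset.Icc 1 h, r j * (L 0 + ∑ g ∈ Finset.Icc 1 j, γ g * (δ (g - 1) - δ g)) :=
        step1
    _ = L 0 + ∑ g ∈ Finset.Icc 1 h,
          (γ g * ∑ p ∈ Finset.Icc g h, r p) * (δ (g - 1) - δ g) := step2
    _ ≤ L 0 + ∑ g ∈ Finset.Icc 1 h, M * (δ (g - 1) - δ g) := by linarith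
    _ = L 0 + M * (δ 0 - δ h) := by rw [← Finset.mul_sum, tel]
    _ ≤ (1 + β * M) * L 0 := by
        nlinarith [mul_le_mul_of_nonneg_left hδ0 hM0, mul_nonneg hM0 hδh]
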